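/- Let M be an odd positive integer and let u_1, …, u_M be real numbers with S = ∑_{m=1}^{M} u_m ≠ 0. For each b ≥ max_m |u_m| with b > 0, let û_1(b), …, û_M(b) be independent random variables with P(û_m(b) = 1) = (b + u_m)/(2b) and P(û_m(b) = −1) = (b − u_m)/(2b). Then there exist constants C > 0 and b_0 ≥ max_m |u_m| such that for all b ≥ b_0: | P( sign(∑_{m=1}^{M} û_m(b)) ≠ sign(S) ) − ( 1/2 − (C(M−1, (M−1)/2) / (2^M · b)) · |S| ) | ≤ C/b², where C(n,k) denotes the binomial coefficient. -/

import Mathlib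

open MeasureTheory ProbabilityTheory

section Aux

open Finset in
lemma aux_count (k : ℕ) (m : Fin (2*k+1)) :
    ∑ A ∈ univ.filter (fun A : Finset (Fin (2*k+1)) => A.card ≤ k),
      (if m ∈ A then (1:ℝ) else -1) = -((2*k).choose k : ℝ) := by
  classical
  rw [← Finset.sum_filter_add_sum_filter_not _ (fun A => A.card = k ∧ m ∉ A)]
  have h1 : ((univ.filter (fun A : Finset (Fin (2*k+1)) => A.card ≤ k)).filter
      (fun A => A.card = k ∧ m ∉ A)) = (univ.erase m).powersetCard k := by
    ext A
    rw [mem_filter, mem_filter, mem_powersetCard, subset_erase]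
    constructor
    · rintro ⟨⟨-, _⟩, hk, hm⟩; exact ⟨⟨subset_univ A, hm⟩, hk⟩
    · rintro ⟨⟨-, hm⟩, hk⟩; exact ⟨⟨mem_univ A, hk.le⟩, hk, hm⟩
  have h2 : ∑ A ∈ ((univ.filter (fun A : Finset (Fin (2*k+1)) => A.card ≤ k)).filter
      (fun A => A.card = k ∧ m ∉ A)), (if m ∈ A then (1:ℝ) else -1)
      = -((2*k).choose k : ℝ) := by
    rw [h1]
    calc ∑ A ∈ (univ.erase m).powersetCard k, (if m ∈ A then (1:ℝ) else -1)
        = ∑ _A ∈ (univ.erase m).powersetCard k, (-1 : ℝ) := by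
          refine Finset.sum_congr rfl fun A hA => ?_
          rw [mem_powersetCard, subset_erase] at hA
          rw [if_neg hA.1.2]
      _ = -((2*k).choose k : ℝ) := by
          rw [Finset.sum_const, card_powersetCard, card_erase_of_mem (mem_univ m),
            card_univ, Fintype.card_fin]
          simp
  have h3 : ∑ A ∈ ((univ.filter (fun A : Finset (Fin (2*k+1)) => A.card ≤ k)).filter
      (fun A => ¬(A.card = k ∧ m ∉ A))), (if m ∈ A then (1:ℝ) else -1) = 0 := by
    apply Finset.sum_involution
      (g := fun A _ => if m ∈ A then A.erase m else insert m A)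
    · intro A _
      by_cases h : m ∈ A
      · simp [h, Finset.notMem_erase]
      · simp [h]
    · intro A _ _
      by_cases h : m ∈ A
      · rw [if_pos h]
        intro hEq
        apply Finset.notMem_erase m A
        rw [hEq]; exact h
      · rw [if_neg h]
        intro hEq
        apply h
        rw [← hEq]; exact mem_insert_self m A
    · intro A hA
      by_cases h : m ∈ A
      · rw [if_pos h, if_neg (Finset.notMem_erase m A), insert_erase h]
      · rw [if_neg h, if_pos (mem_insert_self m A), erase_insert h]
    · intro A hA
      rw [mem_filter, mem_filter] at hA ⊢
      obtain ⟨⟨-, hle⟩, hne⟩ := hA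
      by_cases h : m ∈ A
      · rw [if_pos h]
        have hc : (A.erase m).card = A.card - 1 := card_erase_of_mem h
        have hpos : 0 < A.card := card_pos.mpr ⟨m, h⟩
        refine ⟨⟨mem_univ _, by omega⟩, ?_⟩
        rintro ⟨hck, -⟩; omega
      · rw [if_neg h]
        have hk' : A.card ≠ k := fun hc => hne ⟨hc, h⟩
        have hc : (insert m A).card = A.card + 1 := card_insert_of_notMem h
        refine ⟨⟨mem_univ _, by omega⟩, ?_⟩
        rintro ⟨-, hmm⟩; exact hmm (mem_insert_self m A)
  rw [h2, h3, add_zero]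


open Finset in
lemma aux_expand (n : ℕ) (hn : 1 ≤ n) (x : Fin n → ℝ) (ε : ℝ)
    (hx : ∀ m, |x m| ≤ ε) (hε : ε ≤ 1) :
    |(∏ m, ((1:ℝ)/2 + x m)) - (∏ m, ((1:ℝ)/2 - x m))
      - 4 * (1/2)^n * ∑ m, x m| ≤ 2^(n+1) * ε^2 := by
  classical
  have hε0 : 0 ≤ ε := le_trans (abs_nonneg _) (hx ⟨0, hn⟩)
  set c : Finset (Fin n) → ℝ :=
    fun t => ((∏ i ∈ t, x i) - ∏ i ∈ t, (-x i)) * (1/2)^(n - t.card) with hc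
  have hexp : ∀ y : Fin n → ℝ, (∏ m, ((1:ℝ)/2 + y m))
      = ∑ t ∈ (univ : Finset (Fin n)).powerset, (∏ i ∈ t, y i) * (1/2)^(n - t.card) := by
    intro y
    have h0 : (∏ m, ((1:ℝ)/2 + y m)) = ∏ m, (y m + 1/2) := by
      refine Finset.prod_congr rfl fun m _ => by first | ring | (simp only [Pi.neg_apply]; ring)
    rw [h0, Finset.prod_add]
    refine Finset.sum_congr rfl fun t ht => ?_
    rw [Finset.prod_const, card_sdiff_of_subset (mem_powerset.mp ht), card_univ, Fintype.card_fin]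
  have hD : (∏ m, ((1:ℝ)/2 + x m)) - (∏ m, ((1:ℝ)/2 - x m))
      = ∑ t ∈ (univ : Finset (Fin n)).powerset, c t := by
    have h2 : (∏ m, ((1:ℝ)/2 - x m)) = ∏ m, ((1:ℝ)/2 + (fun i => -(x i)) m) := by
      refine Finset.prod_congr rfl fun m _ => by ring
    rw [h2, hexp x, hexp (fun i => -(x i)), ← Finset.sum_sub_distrib]
    refine Finset.sum_congr rfl fun t ht => ?_
    simp only [hc]
    ring
  -- sum over singletons
  have hsingle : ∑ t ∈ (univ : Finset (Fin n)).powerset.filter (fun t => t.card = 1), c t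
      = 4 * (1/2)^n * ∑ m, x m := by
    rw [← Finset.powersetCard_eq_filter, Finset.powersetCard_one, Finset.sum_map]
    obtain ⟨j, rfl⟩ : ∃ j, n = j + 1 := ⟨n - 1, by omega⟩
    have : ∀ m : Fin (j+1), c {m} = 4 * (1/2)^(j+1) * x m := by
      intro m
      simp only [hc, Finset.prod_singleton, Finset.card_singleton]
      rw [Nat.add_sub_cancel, pow_succ]
      ring
    simp only [Function.Embedding.coeFn_mk]
    rw [Finset.sum_congr rfl fun m _ => this m, ← Finset.mul_sum]
  -- the rest
  have hrest : |∑ t ∈ (univ : Finset (Fin n)).powerset.filter (fun t => ¬ t.card = 1), c t|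
      ≤ 2^(n+1) * ε^2 := by
    calc |∑ t ∈ (univ : Finset (Fin n)).powerset.filter (fun t => ¬ t.card = 1), c t|
        ≤ ∑ t ∈ (univ : Finset (Fin n)).powerset.filter (fun t => ¬ t.card = 1), |c t| :=
          Finset.abs_sum_le_sum_abs _ _
      _ ≤ ∑ _t ∈ (univ : Finset (Fin n)).powerset.filter (fun t => ¬ t.card = 1), 2 * ε^2 := by
          refine Finset.sum_le_sum fun t ht => ?_
          rw [mem_filter] at ht
          rcases Nat.eq_zero_or_pos t.card with h0 | hpos
          · have : t = ∅ := Finset.card_eq_zero.mp h0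
            subst this
            simp only [hc, Finset.prod_empty, sub_self, zero_mul, abs_zero]
            positivity
          · have h2le : 2 ≤ t.card := by omega
            have hb1 : |∏ i ∈ t, x i| ≤ ε^2 := by
              calc |∏ i ∈ t, x i| ≤ ∏ i ∈ t, |x i| := Finset.abs_prod _ _ |>.le
                _ ≤ ∏ i ∈ t, ε := Finset.prod_le_prod (fun i _ => abs_nonneg _)
                    (fun i _ => hx i)
                _ = ε ^ t.card := Finset.prod_const ε
                _ ≤ ε ^ 2 := pow_le_pow_of_le_one hε0 hε h2le
            have hb2 : |∏ i ∈ t, (-x i)| ≤ ε^2 := by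
              calc |∏ i ∈ t, (-x i)| ≤ ∏ i ∈ t, |(-x i)| := Finset.abs_prod _ _ |>.le
                _ = ∏ i ∈ t, |x i| := by simp
                _ ≤ ∏ i ∈ t, ε := Finset.prod_le_prod (fun i _ => abs_nonneg _)
                    (fun i _ => hx i)
                _ = ε ^ t.card := Finset.prod_const ε
                _ ≤ ε ^ 2 := pow_le_pow_of_le_one hε0 hε h2le
            have hpow : ((1:ℝ)/2)^(n - t.card) ≤ 1 :=
              pow_le_one₀ (by norm_num) (by norm_num)
            have hpow0 : (0:ℝ) ≤ ((1:ℝ)/2)^(n - t.card) := by positivity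
            calc |c t| = |(∏ i ∈ t, x i) - ∏ i ∈ t, (-x i)| * ((1/2)^(n - t.card)) := by
                  rw [hc, abs_mul, abs_of_nonneg hpow0]
              _ ≤ (|∏ i ∈ t, x i| + |∏ i ∈ t, (-x i)|) * 1 := by
                  apply mul_le_mul (abs_sub _ _) hpow hpow0
                  positivity
              _ ≤ 2 * ε^2 := by nlinarith
      _ = ((univ : Finset (Fin n)).powerset.filter (fun t => ¬ t.card = 1)).card • (2 * ε^2) :=
          Finset.sum_const _
      _ ≤ 2^n * (2 * ε^2) := by
          rw [nsmul_eq_mul]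
          have hcard : ((univ : Finset (Fin n)).powerset.filter (fun t => ¬ t.card = 1)).card
              ≤ 2^n := by
            calc _ ≤ (univ : Finset (Fin n)).powerset.card :=
                  Finset.card_le_card (Finset.filter_subset _ _)
              _ = 2^n := by rw [Finset.card_powerset, card_univ, Fintype.card_fin]
          have : (0:ℝ) ≤ 2 * ε^2 := by positivity
          exact mul_le_mul_of_nonneg_right (by exact_mod_cast hcard) this
      _ = 2^(n+1) * ε^2 := by ring
  have hsplit : ∑ t ∈ (univ : Finset (Fin n)).powerset, c t
      = (∑ t ∈ (univ : Finset (Fin n)).powerset.filter (fun t => t.card = 1), c t)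
      + ∑ t ∈ (univ : Finset (Fin n)).powerset.filter (fun t => ¬ t.card = 1), c t :=
    (Finset.sum_filter_add_sum_filter_not _ _ _).symm
  rw [hD, hsplit, hsingle]
  simpa using hrest


open Finset in
lemma aux_key (k : ℕ) (x : Fin (2*k+1) → ℝ) (ε : ℝ)
    (hx : ∀ m, |x m| ≤ ε) (hε : ε ≤ 1)
    (aux_count : ∀ m : Fin (2*k+1), ∑ A ∈ univ.filter (fun A : Finset (Fin (2*k+1)) => A.card ≤ k),
      (if m ∈ A then (1:ℝ) else -1) = -((2*k).choose k : ℝ))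
    (aux_expand : ∀ (y : Fin (2*k+1) → ℝ), (∀ m, |y m| ≤ ε) →
      |(∏ m, ((1:ℝ)/2 + y m)) - (∏ m, ((1:ℝ)/2 - y m))
        - 4 * (1/2)^(2*k+1) * ∑ m, y m| ≤ 2^(2*k+1+1) * ε^2) :
    |(∑ A ∈ univ.filter (fun A : Finset (Fin (2*k+1)) => A.card ≤ k),
        ∏ i, (if i ∈ A then (1:ℝ)/2 + x i else 1/2 - x i))
      - (1/2 - ((2*k).choose k : ℝ) * (1/2)^(2*k+1) * 2 * ∑ i, x i)|
      ≤ 2^(2*(2*k+1)) * ε^2 := by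
  classical
  set W : Finset (Finset (Fin (2*k+1))) := univ.filter (fun A => A.card ≤ k) with hW
  set q : Finset (Fin (2*k+1)) → ℝ := fun A => ∏ i, (if i ∈ A then (1:ℝ)/2 + x i else 1/2 - x i)
    with hq
  set y : Finset (Fin (2*k+1)) → Fin (2*k+1) → ℝ := fun A i => if i ∈ A then x i else -(x i) with hy
  -- q A = ∏ (1/2 + y A), q Aᶜ = ∏ (1/2 - y A)
  have hqy : ∀ A, q A = ∏ i, ((1:ℝ)/2 + y A i) := by
    intro A
    refine Finset.prod_congr rfl fun i _ => ?_
    by_cases h : i ∈ A <;> simp [hy, h] <;> try ring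
  have hqyc : ∀ A : Finset (Fin (2*k+1)), q Aᶜ = ∏ i, ((1:ℝ)/2 - y A i) := by
    intro A
    refine Finset.prod_congr rfl fun i _ => ?_
    by_cases h : i ∈ A <;> simp [Finset.mem_compl, hy, h] <;> try ring
  -- total sum is 1
  have htot : ∑ A ∈ (univ : Finset (Finset (Fin (2*k+1)))), q A = 1 := by
    have h1 : ∀ A : Finset (Fin (2*k+1)), q A
        = (∏ i ∈ A, ((1:ℝ)/2 + x i)) * ∏ i ∈ univ \ A, ((1:ℝ)/2 - x i) := by
      intro A
      simp only [hq]
      rw [Finset.prod_ite]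
      congr 1
      · apply Finset.prod_congr _ (fun i _ => rfl)
        ext i; simp
      · apply Finset.prod_congr _ (fun i _ => rfl)
        ext i; simp
    calc ∑ A ∈ (univ : Finset (Finset (Fin (2*k+1)))), q A
        = ∑ A ∈ (univ : Finset (Fin (2*k+1))).powerset,
            (∏ i ∈ A, ((1:ℝ)/2 + x i)) * ∏ i ∈ univ \ A, ((1:ℝ)/2 - x i) := by
          rw [Finset.powerset_univ]
          exact Finset.sum_congr rfl fun A _ => h1 A
      _ = ∏ i, (((1:ℝ)/2 + x i) + ((1:ℝ)/2 - x i)) := (Finset.prod_add _ _ _).symm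
      _ = 1 := by
          rw [show (fun i => ((1:ℝ)/2 + x i) + ((1:ℝ)/2 - x i)) = fun _ => (1:ℝ) by
            funext i; ring]
          simp
  -- complement bijection
  have hcompl : ∑ A ∈ univ.filter (fun A : Finset (Fin (2*k+1)) => ¬ A.card ≤ k), q A
      = ∑ A ∈ W, q Aᶜ := by
    refine Finset.sum_nbij' (i := fun A => Aᶜ) (j := fun A => Aᶜ) ?_ ?_ ?_ ?_ ?_
    · intro A hA
      rw [mem_filter] at hA ⊢
      refine ⟨mem_univ _, ?_⟩
      rw [Finset.card_compl, Fintype.card_fin]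
      omega
    · intro A hA
      rw [hW, mem_filter] at hA
      rw [mem_filter]
      refine ⟨mem_univ _, ?_⟩
      rw [Finset.card_compl, Fintype.card_fin]
      have : A.card ≤ 2*k+1 := by simpa using Finset.card_le_univ A
      omega
    · intro A _; exact compl_compl A
    · intro A _; exact compl_compl A
    · intro A _; rw [compl_compl]
  -- Sig1 in terms of T
  set Sig1 := ∑ A ∈ W, q A with hSig1
  have hsum : Sig1 + ∑ A ∈ W, q Aᶜ = 1 := by
    rw [hSig1, ← hcompl, hW]
    rw [Finset.sum_filter_add_sum_filter_not]
    exact htot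
  -- the residuals
  set r : Finset (Fin (2*k+1)) → ℝ := fun A => (q A - q Aᶜ) - 4 * (1/2)^(2*k+1) * ∑ i, y A i with hr
  have hrbound : ∀ A, |r A| ≤ 2^(2*k+1+1) * ε^2 := by
    intro A
    have := aux_expand (y A) (fun m => by by_cases h : m ∈ A <;> simp [hy, h, hx m, abs_neg])
    rw [← hqy A, ← hqyc A] at this
    exact this
  -- linear term
  have hlin : ∑ A ∈ W, ∑ i, y A i = -((2*k).choose k : ℝ) * ∑ i, x i := by
    rw [Finset.sum_comm]
    have h1 : ∀ i : Fin (2*k+1), ∑ A ∈ W, y A i = x i * -((2*k).choose k : ℝ) := by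
      intro i
      have h2 : ∀ A : Finset (Fin (2*k+1)), y A i = x i * (if i ∈ A then (1:ℝ) else -1) := by
        intro A; by_cases h : i ∈ A <;> simp [hy, h] <;> ring
      rw [Finset.sum_congr rfl fun A _ => h2 A, ← Finset.mul_sum, aux_count i]
    rw [Finset.sum_congr rfl fun i _ => h1 i, ← Finset.sum_mul]
    ring
  -- put together
  have hT : Sig1 - (1 - Sig1) = ∑ A ∈ W, (q A - q Aᶜ) := by
    rw [← hsum, Finset.sum_sub_distrib]; ring
  have hTval : ∑ A ∈ W, (q A - q Aᶜ)
      = 4 * (1/2)^(2*k+1) * (-((2*k).choose k : ℝ) * ∑ i, x i) + ∑ A ∈ W, r A := by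
    have : ∀ A, q A - q Aᶜ = 4 * (1/2)^(2*k+1) * ∑ i, y A i + r A := by intro A; rw [hr]; ring
    rw [Finset.sum_congr rfl fun A _ => this A, Finset.sum_add_distrib, ← Finset.mul_sum, hlin]
  have hRbound : |∑ A ∈ W, r A| ≤ 2^(2*k+1) * (2^(2*k+1+1) * ε^2) := by
    calc |∑ A ∈ W, r A| ≤ ∑ A ∈ W, |r A| := Finset.abs_sum_le_sum_abs _ _
      _ ≤ ∑ _A ∈ W, 2^(2*k+1+1) * ε^2 := Finset.sum_le_sum fun A _ => hrbound A
      _ = W.card • (2^(2*k+1+1) * ε^2) := Finset.sum_const _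
      _ ≤ 2^(2*k+1) * (2^(2*k+1+1) * ε^2) := by
          rw [nsmul_eq_mul]
          have hcard : W.card ≤ 2^(2*k+1) := by
            calc W.card ≤ (univ : Finset (Finset (Fin (2*k+1)))).card :=
                Finset.card_le_card (Finset.filter_subset _ _)
              _ = 2^(2*k+1) := by rw [card_univ, Fintype.card_finset, Fintype.card_fin]
          exact mul_le_mul_of_nonneg_right (by exact_mod_cast hcard) (by positivity)
  -- conclude
  have hfinal : Sig1 - (1/2 - ((2*k).choose k : ℝ) * (1/2)^(2*k+1) * 2 * ∑ i, x i)
      = (∑ A ∈ W, r A) / 2 := by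
    have h2 : 2 * Sig1 - 1 = 4 * (1/2)^(2*k+1) * (-((2*k).choose k : ℝ) * ∑ i, x i) + ∑ A ∈ W, r A := by
      rw [← hTval, ← hT]; ring
    linarith [h2]
  rw [hfinal]
  rw [abs_div]
  rw [show |(2:ℝ)| = 2 by norm_num]
  rw [div_le_iff₀ (by norm_num)]
  calc |∑ A ∈ W, r A| ≤ 2^(2*k+1) * (2^(2*k+1+1) * ε^2) := hRbound
    _ = 2^(2*(2*k+1)) * ε^2 * 2 := by
        rw [two_mul, pow_add, pow_add, pow_one]; ring

open Finset in
lemma aux_tot (n : ℕ) (x : Fin n → ℝ) :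
    ∑ A ∈ (univ : Finset (Finset (Fin n))),
      ∏ i, (if i ∈ A then (1:ℝ)/2 + x i else 1/2 - x i) = 1 := by
  classical
  have h1 : ∀ A : Finset (Fin n), (∏ i, (if i ∈ A then (1:ℝ)/2 + x i else 1/2 - x i))
      = (∏ i ∈ A, ((1:ℝ)/2 + x i)) * ∏ i ∈ univ \ A, ((1:ℝ)/2 - x i) := by
    intro A
    rw [Finset.prod_ite]
    congr 1
    · apply Finset.prod_congr _ (fun i _ => rfl)
      ext i; simp
    · apply Finset.prod_congr _ (fun i _ => rfl)
      ext i; simp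
  calc ∑ A ∈ (univ : Finset (Finset (Fin n))),
        ∏ i, (if i ∈ A then (1:ℝ)/2 + x i else 1/2 - x i)
      = ∑ A ∈ (univ : Finset (Fin n)).powerset,
          (∏ i ∈ A, ((1:ℝ)/2 + x i)) * ∏ i ∈ univ \ A, ((1:ℝ)/2 - x i) := by
        rw [Finset.powerset_univ]
        exact Finset.sum_congr rfl fun A _ => h1 A
    _ = ∏ i, (((1:ℝ)/2 + x i) + ((1:ℝ)/2 - x i)) := (Finset.prod_add _ _ _).symm
    _ = 1 := by
        rw [show (fun i => ((1:ℝ)/2 + x i) + ((1:ℝ)/2 - x i)) = fun _ => (1:ℝ) by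
          funext i; ring]
        simp
end Aux

/-- First-order expansion (in `1/b`) of the wrong-aggregation probability of
majority vote over `sto-sign` outputs: there are `C > 0` and `b₀ ≥ max |u_m|` such that for all
`b ≥ b₀`,
`| P(sign(∑ û_m(b)) ≠ sign S) - (1/2 - C(M-1,(M-1)/2)/(2^M b) · |S|) | ≤ C / b²`. -/
theorem stmt_2 {Ω : Type*} [MeasurableSpace Ω] (P : Measure Ω) [IsProbabilityMeasure P]
    (M : ℕ) (hModd : Odd M) (hMpos : 0 < M)
    (u : Fin M → ℝ) (S : ℝ) (hS : S = ∑ m, u m) (hS0 : S ≠ 0)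
    (uhat : ℝ → Fin M → Ω → ℝ)
    (hmeas : ∀ b m, Measurable (uhat b m))
    (hindep : ∀ b : ℝ, 0 < b → (∀ m, |u m| ≤ b) →
      iIndepFun (uhat b) P)
    (h1 : ∀ b : ℝ, 0 < b → (∀ m, |u m| ≤ b) → ∀ m,
      (P {ω | uhat b m ω = 1}).toReal = (b + u m) / (2 * b))
    (hneg1 : ∀ b : ℝ, 0 < b → (∀ m, |u m| ≤ b) → ∀ m,
      (P {ω | uhat b m ω = -1}).toReal = (b - u m) / (2 * b)) :
    ∃ C > (0 : ℝ), ∃ b₀ : ℝ, (0 < b₀ ∧ ∀ m, |u m| ≤ b₀) ∧ ∀ b ≥ b₀,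
      |(P {ω | Real.sign (∑ m, uhat b m ω) ≠ Real.sign S}).toReal -
          (1 / 2 - ((M - 1).choose ((M - 1) / 2) : ℝ) / (2 ^ M * b) * |S|)| ≤ C / b ^ 2 := by
  classical
  obtain ⟨k, hMk⟩ := hModd
  subst hMk
  set U : ℝ := ∑ m, |u m| with hU
  have hU0 : 0 ≤ U := Finset.sum_nonneg fun m _ => abs_nonneg _
  have hUb : ∀ m, |u m| ≤ U :=
    fun m => Finset.single_le_sum (fun i _ => abs_nonneg (u i)) (Finset.mem_univ m)
  refine ⟨2^(2*(2*k+1)) * U^2 + 1, by positivity, U + 1,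
    ⟨by positivity, fun m => by linarith [hUb m]⟩, ?_⟩
  intro b hb
  have hb0 : 0 < b := by linarith
  have hub : ∀ m, |u m| ≤ b := fun m => by linarith [hUb m]
  set x : Fin (2*k+1) → ℝ := fun i => u i / (2*b) with hxdef
  set ε : ℝ := U / (2*b) with hεdef
  have hx : ∀ m, |x m| ≤ ε := by
    intro m
    rw [hxdef, hεdef]
    simp only []
    rw [abs_div, abs_of_pos (by positivity : (0:ℝ) < 2*b)]
    gcongr
    exact hUb m
  have hε : ε ≤ 1 := by
    rw [hεdef, div_le_one (by positivity)]
    linarith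
  set q : Finset (Fin (2*k+1)) → ℝ :=
    fun A => ∏ i, (if i ∈ A then (1:ℝ)/2 + x i else 1/2 - x i) with hqdef
  -- single event probabilities
  have hset1 : ∀ i, (P {ω | uhat b i ω = 1}).toReal = 1/2 + x i := by
    intro i
    rw [h1 b hb0 hub i, hxdef]
    field_simp
  have hset2 : ∀ i, (P {ω | uhat b i ω = -1}).toReal = 1/2 - x i := by
    intro i
    rw [hneg1 b hb0 hub i, hxdef]
    field_simp
  -- the elementary events
  set Ev : Finset (Fin (2*k+1)) → Set Ω :=
    fun A => ⋂ i, {ω | uhat b i ω = (if i ∈ A then (1:ℝ) else -1)} with hEvdef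
  have hEvMeas : ∀ A, MeasurableSet (Ev A) := fun A =>
    MeasurableSet.iInter fun i => hmeas b i (measurableSet_singleton _)
  have hEvP : ∀ A, P (Ev A)
      = ∏ i, P {ω | uhat b i ω = (if i ∈ A then (1:ℝ) else -1)} := by
    intro A
    exact (hindep b hb0 hub).meas_iInter fun i =>
      ⟨{(if i ∈ A then (1:ℝ) else -1)}, measurableSet_singleton _, rfl⟩
  have hqP : ∀ A, (P (Ev A)).toReal = q A := by
    intro A
    rw [hEvP A, ENNReal.toReal_prod]
    refine Finset.prod_congr rfl fun i _ => ?_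
    by_cases h : i ∈ A
    · simp only [if_pos h]; exact hset1 i
    · simp only [if_neg h]; exact hset2 i
  -- null complement
  have hNull : P (⋃ i, ({ω | uhat b i ω = 1} ∪ {ω | uhat b i ω = -1})ᶜ) = 0 := by
    refine measure_iUnion_null fun i => ?_
    have hm1 : MeasurableSet {ω | uhat b i ω = 1} := hmeas b i (measurableSet_singleton 1)
    have hm2 : MeasurableSet {ω | uhat b i ω = -1} := hmeas b i (measurableSet_singleton (-1))
    rw [prob_compl_eq_zero_iff (hm1.union hm2)]
    have hd : Disjoint {ω | uhat b i ω = 1} {ω | uhat b i ω = -1} := by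
      rw [Set.disjoint_left]
      rintro ω h1' h2'
      have hh1 : uhat b i ω = 1 := h1'
      have hh2 : uhat b i ω = -1 := h2'
      rw [hh1] at hh2
      norm_num at hh2
    rw [← ENNReal.toReal_eq_one_iff, measure_union hd hm2,
      ENNReal.toReal_add (measure_ne_top P _) (measure_ne_top P _), hset1 i, hset2 i]
    ring
  -- the bad collection
  set Wb : Finset (Finset (Fin (2*k+1))) := Finset.univ.filter
    (fun A => Real.sign (∑ i, (if i ∈ A then (1:ℝ) else -1)) ≠ Real.sign S) with hWbdef
  have hsub : ∀ A ∈ Wb, Ev A ⊆ {ω | Real.sign (∑ m, uhat b m ω) ≠ Real.sign S} := by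
    intro A hA ω hω
    have hval : ∀ i, uhat b i ω = (if i ∈ A then (1:ℝ) else -1) :=
      fun i => Set.mem_iInter.mp hω i
    have hsum : ∑ i, uhat b i ω = ∑ i, (if i ∈ A then (1:ℝ) else -1) :=
      Finset.sum_congr rfl fun i _ => hval i
    rw [hWbdef, Finset.mem_filter] at hA
    show Real.sign (∑ m, uhat b m ω) ≠ Real.sign S
    rw [hsum]
    exact hA.2
  have hcover : {ω | Real.sign (∑ m, uhat b m ω) ≠ Real.sign S}
      ⊆ (⋃ A ∈ Wb, Ev A) ∪ ⋃ i, ({ω | uhat b i ω = 1} ∪ {ω | uhat b i ω = -1})ᶜ := by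
    intro ω hω
    by_cases hN : ω ∈ ⋃ i, ({ω | uhat b i ω = 1} ∪ {ω | uhat b i ω = -1})ᶜ
    · exact Or.inr hN
    · refine Or.inl ?_
      rw [Set.mem_iUnion] at hN
      push_neg at hN
      have hvals : ∀ i, uhat b i ω = 1 ∨ uhat b i ω = -1 := by
        intro i
        have h' := hN i
        rw [Set.notMem_compl_iff] at h'
        exact h'
      set A : Finset (Fin (2*k+1)) := Finset.univ.filter (fun i => uhat b i ω = 1) with hAdef
      have hmem : ω ∈ Ev A := by
        refine Set.mem_iInter.mpr fun i => ?_
        show uhat b i ω = (if i ∈ A then (1:ℝ) else -1)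
        by_cases h : uhat b i ω = 1
        · rw [if_pos (by rw [hAdef]; exact Finset.mem_filter.mpr ⟨Finset.mem_univ i, h⟩)]
          exact h
        · rcases hvals i with h' | h'
          · exact absurd h' h
          · rw [if_neg (by rw [hAdef]; simp [h])]
            exact h'
      have hAW : A ∈ Wb := by
        rw [hWbdef, Finset.mem_filter]
        refine ⟨Finset.mem_univ _, ?_⟩
        have hsum : ∑ i, (if i ∈ A then (1:ℝ) else -1) = ∑ i, uhat b i ω :=
          Finset.sum_congr rfl fun i _ => (Set.mem_iInter.mp hmem i).symm
        rw [hsum]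
        exact hω
      exact Set.mem_biUnion hAW hmem
  have hdisj : (↑Wb : Set (Finset (Fin (2*k+1)))).PairwiseDisjoint Ev := by
    intro A _ B _ hAB
    obtain ⟨i, hi⟩ : ∃ i, ¬((i ∈ A) ↔ (i ∈ B)) := by
      by_contra h
      push_neg at h
      exact hAB (Finset.ext fun i => h i)
    show Disjoint (Ev A) (Ev B)
    refine Set.disjoint_left.mpr fun ω h1' h2' => ?_
    have hv1 : uhat b i ω = (if i ∈ A then (1:ℝ) else -1) := Set.mem_iInter.mp h1' i
    have hv2 : uhat b i ω = (if i ∈ B then (1:ℝ) else -1) := Set.mem_iInter.mp h2' i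
    rw [hv1] at hv2
    by_cases hiA : i ∈ A <;> by_cases hiB : i ∈ B
    · exact hi (iff_of_true hiA hiB)
    · rw [if_pos hiA, if_neg hiB] at hv2; norm_num at hv2
    · rw [if_neg hiA, if_pos hiB] at hv2; norm_num at hv2
    · exact hi (iff_of_false hiA hiB)
  -- probability identity
  have hPWb : P {ω | Real.sign (∑ m, uhat b m ω) ≠ Real.sign S} = ∑ A ∈ Wb, P (Ev A) := by
    have hle1 : P {ω | Real.sign (∑ m, uhat b m ω) ≠ Real.sign S} ≤ P (⋃ A ∈ Wb, Ev A) := by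
      calc P {ω | Real.sign (∑ m, uhat b m ω) ≠ Real.sign S}
          ≤ P ((⋃ A ∈ Wb, Ev A) ∪ ⋃ i, ({ω | uhat b i ω = 1} ∪ {ω | uhat b i ω = -1})ᶜ) :=
            measure_mono hcover
        _ ≤ P (⋃ A ∈ Wb, Ev A) + P (⋃ i, ({ω | uhat b i ω = 1} ∪ {ω | uhat b i ω = -1})ᶜ) :=
            measure_union_le _ _
        _ = P (⋃ A ∈ Wb, Ev A) := by rw [hNull, add_zero]
    have hle2 : P (⋃ A ∈ Wb, Ev A) ≤ P {ω | Real.sign (∑ m, uhat b m ω) ≠ Real.sign S} :=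
      measure_mono (Set.iUnion₂_subset hsub)
    rw [le_antisymm hle1 hle2]
    exact measure_biUnion_finset hdisj fun A _ => hEvMeas A
  have hPval : (P {ω | Real.sign (∑ m, uhat b m ω) ≠ Real.sign S}).toReal = ∑ A ∈ Wb, q A := by
    rw [hPWb, ENNReal.toReal_sum fun A _ => measure_ne_top P _]
    exact Finset.sum_congr rfl fun A _ => hqP A
  -- the signed-sum of a configuration
  have hcard : ∀ A : Finset (Fin (2*k+1)),
      ∑ i, (if i ∈ A then (1:ℝ) else -1) = 2*(A.card : ℝ) - (2*k+1) := by
    intro A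
    rw [Finset.sum_ite, Finset.sum_const, Finset.sum_const]
    have hf1 : Finset.univ.filter (fun i : Fin (2*k+1) => i ∈ A) = A := by ext i; simp
    have hf2 : Finset.univ.filter (fun i : Fin (2*k+1) => ¬ i ∈ A) = Aᶜ := by ext i; simp
    rw [hf1, hf2, Finset.card_compl, Fintype.card_fin]
    have hAn : A.card ≤ 2*k+1 := by simpa using Finset.card_le_univ A
    simp only [nsmul_eq_mul, mul_one, mul_neg_one]
    rw [Nat.cast_sub hAn]
    push_cast
    ring
  -- the key estimate
  have hKey := aux_key k x ε hx hε (aux_count k)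
    (fun y hy => aux_expand (2*k+1) (by omega) y ε hy hε)
  have hsx : ∑ i, x i = S / (2*b) := by
    rw [hxdef, hS]
    rw [← Finset.sum_div]
  have hch : ((2*k+1) - 1).choose (((2*k+1) - 1)/2) = (2*k).choose k := by
    congr 1 <;> omega
  have hbound : 2^(2*(2*k+1)) * ε^2 ≤ (2^(2*(2*k+1)) * U^2 + 1) / b^2 := by
    have hε2 : ε^2 = U^2 / (4*b^2) := by
      rw [hεdef, div_pow]
      congr 1
      ring
    rw [hε2, show (2:ℝ)^(2*(2*k+1)) * (U^2 / (4*b^2)) = (2^(2*(2*k+1)) * U^2/4) / b^2 by ring]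
    gcongr
    have hX : (0:ℝ) ≤ 2^(2*(2*k+1)) * U^2 := by positivity
    linarith
  rcases lt_or_gt_of_ne hS0 with hSneg | hSpos
  · -- S < 0
    have hWeq : Wb = Finset.univ.filter (fun A : Finset (Fin (2*k+1)) => ¬ A.card ≤ k) := by
      rw [hWbdef]
      ext A
      simp only [Finset.mem_filter, Finset.mem_univ, true_and]
      rw [hcard A, Real.sign_of_neg hSneg]
      by_cases hc : A.card ≤ k
      · have hlt : 2*(A.card : ℝ) - (2*k+1) < 0 := by
          have : (A.card : ℝ) ≤ k := by exact_mod_cast hc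
          linarith
        rw [Real.sign_of_neg hlt]
        simp [hc]
      · have hgt : (0:ℝ) < 2*(A.card : ℝ) - (2*k+1) := by
          have : (k:ℝ) + 1 ≤ A.card := by exact_mod_cast Nat.succ_le_of_lt (Nat.lt_of_not_le hc)
          linarith
        rw [Real.sign_of_pos hgt]
        norm_num [hc]
    have hflip : ∑ A ∈ Wb, q A
        = 1 - ∑ A ∈ Finset.univ.filter (fun A : Finset (Fin (2*k+1)) => A.card ≤ k), q A := by
      rw [hWeq]
      have hh := Finset.sum_filter_add_sum_filter_not Finset.univ
        (fun A : Finset (Fin (2*k+1)) => A.card ≤ k) q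
      have htot : ∑ A ∈ (Finset.univ : Finset (Finset (Fin (2*k+1)))), q A = 1 := aux_tot _ x
      linarith
    have hcenter : (1:ℝ)/2 - (((2*k+1) - 1).choose (((2*k+1) - 1)/2) : ℝ) / (2^(2*k+1) * b) * |S|
        = 1 - (1/2 - ((2*k).choose k : ℝ) * (1/2)^(2*k+1) * 2 * ∑ i, x i) := by
      rw [hch, abs_of_neg hSneg, hsx, one_div_pow]
      have h2b : (2:ℝ)^(2*k+1) ≠ 0 := by positivity
      field_simp
      ring
    rw [hPval, hflip, hcenter]
    rw [show (1 - ∑ A ∈ Finset.univ.filter (fun A : Finset (Fin (2*k+1)) => A.card ≤ k), q A)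
        - (1 - (1/2 - ((2*k).choose k : ℝ) * (1/2)^(2*k+1) * 2 * ∑ i, x i))
        = -((∑ A ∈ Finset.univ.filter (fun A : Finset (Fin (2*k+1)) => A.card ≤ k), q A)
        - (1/2 - ((2*k).choose k : ℝ) * (1/2)^(2*k+1) * 2 * ∑ i, x i)) by ring, abs_neg]
    exact hKey.trans hbound
  · -- S > 0
    have hWeq : Wb = Finset.univ.filter (fun A : Finset (Fin (2*k+1)) => A.card ≤ k) := by
      rw [hWbdef]
      ext A
      simp only [Finset.mem_filter, Finset.mem_univ, true_and]
      rw [hcard A, Real.sign_of_pos hSpos]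
      by_cases hc : A.card ≤ k
      · have hlt : 2*(A.card : ℝ) - (2*k+1) < 0 := by
          have : (A.card : ℝ) ≤ k := by exact_mod_cast hc
          linarith
        rw [Real.sign_of_neg hlt]
        norm_num [hc]
      · have hgt : (0:ℝ) < 2*(A.card : ℝ) - (2*k+1) := by
          have : (k:ℝ) + 1 ≤ A.card := by exact_mod_cast Nat.succ_le_of_lt (Nat.lt_of_not_le hc)
          linarith
        rw [Real.sign_of_pos hgt]
        simp [hc]
    have hcenter : (1:ℝ)/2 - (((2*k+1) - 1).choose (((2*k+1) - 1)/2) : ℝ) / (2^(2*k+1) * b) * |S|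
        = 1/2 - ((2*k).choose k : ℝ) * (1/2)^(2*k+1) * 2 * ∑ i, x i := by
      rw [hch, abs_of_pos hSpos, hsx, one_div_pow]
      have h2b : (2:ℝ)^(2*k+1) ≠ 0 := by positivity
      field_simp
    rw [hPval, hWeq, hcenter]
    exact hKey.trans hbound
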